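/- The number of words of length r ≥ 3 over the alphabet {1,2,3} that begin with the letter 1 and satisfy the 'least upward jumps' rule (every occurrence of the letter 3 is preceded somewhere earlier in the word by an occurrence of the letter 2) is equal to (1 + 3^(r-1))/2. -/

import Mathlib

open scoped Classical

/-- Words of length `r` over the alphabet {1,2,3} are encoded as functions
`Fin r → Fin 3`, the letter `k` being encoded as `k - 1 : Fin 3`.
A word satisfies the least upward jumps rule if it begins with the letter 1
and every occurrence of the letter 3 is preceded (strictly earlier) by an
occurrence of the letter 2. -/
def LeastUpwardJumps {r : ℕ} (w : Fin r → Fin 3) : Prop :=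
  (∀ h : 0 < r, w ⟨0, h⟩ = 0) ∧
    ∀ j : Fin r, w j = 2 → ∃ i : Fin r, i < j ∧ w i = 1

def swap3 : Fin 3 → Fin 3 := ![0, 2, 1]

lemma swap3_swap3 (x : Fin 3) : swap3 (swap3 x) = x := by revert x; decide
lemma swap3_eq_zero {x : Fin 3} : swap3 x = 0 ↔ x = 0 := by revert x; decide
lemma swap3_eq_two {x : Fin 3} : swap3 x = 2 ↔ x = 1 := by revert x; decide

/-- A word has the property `Q` if the first letter distinct from `0` (if any)
is not a `2`. -/
def Q {r : ℕ} (w : Fin r → Fin 3) : Prop :=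
  ∀ j : Fin r, (∀ i, i < j → w i = 0) → w j ≠ 2

lemma luj_iff_Q {r : ℕ} (w : Fin r → Fin 3) (h0 : ∀ h : 0 < r, w ⟨0, h⟩ = 0) :
    LeastUpwardJumps w ↔ Q w := by
  constructor
  · rintro ⟨-, h2⟩ j hj hcon
    obtain ⟨i, hi, hwi⟩ := h2 j hcon
    rw [hj i hi] at hwi
    exact absurd hwi (by decide)
  · intro hQ
    refine ⟨h0, ?_⟩
    intro j hj2
    by_contra hno
    push_neg at hno
    have hne : (Finset.univ.filter fun i : Fin r => w i ≠ 0 ∧ i ≤ j).Nonempty := by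
      refine ⟨j, ?_⟩
      simp only [Finset.mem_filter, Finset.mem_univ, true_and]
      exact ⟨by rw [hj2]; decide, le_refl j⟩
    set k := (Finset.univ.filter fun i : Fin r => w i ≠ 0 ∧ i ≤ j).min' hne with hk
    have hkmem := (Finset.univ.filter fun i : Fin r => w i ≠ 0 ∧ i ≤ j).min'_mem hne
    simp only [Finset.mem_filter, Finset.mem_univ, true_and] at hkmem
    obtain ⟨hk0, hkj⟩ := hkmem
    have hlt : ∀ i, i < k → w i = 0 := by
      intro i hi
      by_contra hi0
      have : k ≤ i := Finset.min'_le _ _ (by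
        simp only [Finset.mem_filter, Finset.mem_univ, true_and]
        exact ⟨hi0, le_trans (le_of_lt hi) hkj⟩)
      exact absurd hi (not_lt.mpr this)
    have hk2 : w k ≠ 2 := hQ k hlt
    have hk1 : w k ≠ 1 := by
      rcases lt_or_eq_of_le hkj with h | h
      · exact hno k h
      · rw [← hk] at h
        intro hc
        rw [h, hj2] at hc
        exact absurd hc (by decide)
    have : ∀ x : Fin 3, x = 0 ∨ x = 1 ∨ x = 2 := by decide
    rcases this (w k) with h | h | h
    · exact hk0 h
    · exact hk1 h
    · exact hk2 h

/-- for a nonzero word, `Q` flips under the swap. -/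
lemma Q_swap_iff {r : ℕ} (w : Fin r → Fin 3) (hne : w ≠ 0) :
    Q w ↔ ¬ Q (swap3 ∘ w) := by
  have hex : ∃ j, w j ≠ 0 := Function.ne_iff.mp hne
  have hne' : (Finset.univ.filter fun i : Fin r => w i ≠ 0).Nonempty := by
    obtain ⟨j, hj⟩ := hex
    exact ⟨j, by simpa using hj⟩
  set j0 := (Finset.univ.filter fun i : Fin r => w i ≠ 0).min' hne' with hj0
  have hj0mem := (Finset.univ.filter fun i : Fin r => w i ≠ 0).min'_mem hne'
  simp only [Finset.mem_filter, Finset.mem_univ, true_and] at hj0mem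
  have hlt : ∀ i, i < j0 → w i = 0 := by
    intro i hi
    by_contra hi0
    have : j0 ≤ i := Finset.min'_le _ _ (by simpa using hi0)
    exact absurd hi (not_lt.mpr this)
  have hlt' : ∀ i, i < j0 → (swap3 ∘ w) i = 0 := fun i hi => by
    simp [swap3_eq_zero, hlt i hi]
  have h012 : ∀ x : Fin 3, x = 0 ∨ x = 1 ∨ x = 2 := by decide
  rcases h012 (w j0) with h | h | h
  · exact absurd h hj0mem
  · -- w j0 = 1 : Q w holds, Q (swap3 ∘ w) fails
    constructor
    · intro _ hQ'
      exact hQ' j0 hlt' (by simp [Function.comp, swap3_eq_two, h])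
    · intro _ j hj hcon
      rcases lt_trichotomy j j0 with hlt2 | rfl | hgt
      · rw [hlt j hlt2] at hcon; exact absurd hcon (by decide)
      · rw [h] at hcon; exact absurd hcon (by decide)
      · have := hj j0 hgt
        rw [this] at h
        exact absurd h (by decide)
  · -- w j0 = 2 : Q w fails, Q (swap3 ∘ w) holds
    constructor
    · intro hQ
      exact absurd h (hQ j0 hlt)
    · intro hnQ
      exfalso
      apply hnQ
      intro j hj hcon
      rcases lt_trichotomy j j0 with hlt2 | rfl | hgt
      · have := hlt' j hlt2
        rw [this] at hcon; exact absurd hcon (by decide)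
      · simp only [Function.comp, h] at hcon
        exact absurd hcon (by decide)
      · have := hj j0 hgt
        simp only [Function.comp, swap3_eq_zero] at this
        rw [this] at h
        exact absurd h (by decide)

/-- The number of words of length `r ≥ 3` over {1,2,3} beginning with 1 and
satisfying the least upward jumps rule is `(1 + 3^(r-1))/2`. -/
theorem count_least_upward_jumps (r : ℕ) (hr : 3 ≤ r) :
    (Finset.univ.filter fun w : Fin r → Fin 3 => LeastUpwardJumps w).card
      = (1 + 3 ^ (r - 1)) / 2 := by
  obtain ⟨n, rfl⟩ : ∃ n, r = n + 1 := ⟨r - 1, by omega⟩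
  have h012 : ∀ x : Fin 3, x = 0 ∨ x = 1 ∨ x = 2 := by decide
  set A := (Finset.univ.filter fun w : Fin (n + 1) → Fin 3 => LeastUpwardJumps w) with hA
  set B := (Finset.univ.filter fun w : Fin (n + 1) → Fin 3 =>
      w 0 = 0 ∧ ¬ LeastUpwardJumps w) with hB
  -- A and B partition the words starting with 0
  have hw0 : ∀ w : Fin (n + 1) → Fin 3, LeastUpwardJumps w → w 0 = 0 := by
    intro w hw
    have := hw.1 (Nat.succ_pos n)
    simpa using this
  have hsplit : A.card + B.card = 3 ^ n := by
    have hU : A ∪ B = Finset.univ.filter fun w : Fin (n + 1) → Fin 3 => w 0 = 0 := by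
      ext w
      simp only [hA, hB, Finset.mem_union, Finset.mem_filter, Finset.mem_univ, true_and]
      constructor
      · rintro (h | h)
        · exact hw0 w h
        · exact h.1
      · intro h
        by_cases hl : LeastUpwardJumps w
        · exact Or.inl hl
        · exact Or.inr ⟨h, hl⟩
    have hdisj : Disjoint A B := by
      rw [Finset.disjoint_left]
      intro w hwA hwB
      simp only [hA, Finset.mem_filter, Finset.mem_univ, true_and] at hwA
      simp only [hB, Finset.mem_filter, Finset.mem_univ, true_and] at hwB
      exact hwB.2 hwA
    have hcard : (Finset.univ.filter fun w : Fin (n + 1) → Fin 3 => w 0 = 0).card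
        = 3 ^ n := by
      have hbij : (Finset.univ.filter fun w : Fin (n + 1) → Fin 3 => w 0 = 0).card
          = (Finset.univ : Finset (Fin n → Fin 3)).card :=
        Finset.card_nbij' (fun w => w ∘ Fin.succ) (fun v => Fin.cons 0 v)
          (fun w _ => Finset.mem_univ _)
          (fun v _ => by
            simp only [Finset.mem_coe, Finset.mem_filter, Finset.mem_univ, true_and, Fin.cons_zero])
          (fun w hw => by
            simp only [Finset.mem_coe, Finset.mem_filter, Finset.mem_univ, true_and] at hw
            funext i
            refine Fin.cases ?_ (fun k => ?_) i
            · simp [hw]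
            · simp)
          (fun v _ => by funext i; simp)
      rw [hbij]
      simp
    rw [← Finset.card_union_of_disjoint hdisj, hU, hcard]
  -- the zero word is in A
  have hzero : (0 : Fin (n + 1) → Fin 3) ∈ A := by
    simp only [hA, Finset.mem_filter, Finset.mem_univ, true_and]
    exact ⟨fun _ => rfl, fun j hj => by
      rw [Pi.zero_apply] at hj; exact absurd hj (by decide)⟩
  -- bijection between A minus the zero word and B, via swap3
  have hAB : (A.erase 0).card = B.card := by
    refine Finset.card_bij' (fun w _ => swap3 ∘ w) (fun v _ => swap3 ∘ v)
      ?_ ?_ ?_ ?_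
    · intro w hw
      rw [Finset.mem_erase] at hw
      obtain ⟨hwz, hwA⟩ := hw
      simp only [hA, Finset.mem_filter, Finset.mem_univ, true_and] at hwA
      simp only [hB, Finset.mem_filter, Finset.mem_univ, true_and]
      have hw00 : w 0 = 0 := hw0 w hwA
      constructor
      · simp [Function.comp, swap3_eq_zero, hw00]
      · rw [luj_iff_Q _ (fun h => by simp [Function.comp, swap3_eq_zero, hw00])]
        have hQw : Q w := (luj_iff_Q w hwA.1).mp hwA
        exact (Q_swap_iff w hwz).mp hQw
    · intro v hv
      simp only [hB, Finset.mem_filter, Finset.mem_univ, true_and] at hv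
      obtain ⟨hv0, hvn⟩ := hv
      have hvz : v ≠ 0 := by
        rintro rfl
        apply hvn
        exact ⟨fun _ => rfl, fun j hj => by
          rw [Pi.zero_apply] at hj; exact absurd hj (by decide)⟩
      have hQv : ¬ Q v := by
        intro hQ
        exact hvn ((luj_iff_Q v (fun h => by simpa using hv0)).mpr hQ)
      have hsvz : swap3 ∘ v ≠ 0 := by
        intro hc
        apply hvz
        funext i
        have : (swap3 ∘ v) i = 0 := by rw [hc]; rfl
        simpa [Function.comp, swap3_eq_zero] using this
      have hvv : swap3 ∘ (swap3 ∘ v) = v := by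
        funext i; simp [Function.comp, swap3_swap3]
      have hQsv : Q (swap3 ∘ v) :=
        (Q_swap_iff _ hsvz).mpr (by rw [hvv]; exact hQv)
      rw [Finset.mem_erase]
      constructor
      · exact hsvz
      · simp only [hA, Finset.mem_filter, Finset.mem_univ, true_and]
        exact (luj_iff_Q _ (fun h => by
          simp [Function.comp, swap3_eq_zero]
          simpa using hv0)).mpr hQsv
    · intro w _
      funext i; simp [Function.comp, swap3_swap3]
    · intro v _
      funext i; simp [Function.comp, swap3_swap3]
  have hcardA : A.card = (A.erase 0).card + 1 := by
    rw [Finset.card_erase_of_mem hzero]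
    have : 1 ≤ A.card := Finset.card_pos.mpr ⟨0, hzero⟩
    omega
  have hfin : A.card = B.card + 1 := by rw [hcardA, hAB]
  have : (n + 1) - 1 = n := by omega
  rw [this]
  have h3 : 1 ≤ 3 ^ n := Nat.one_le_pow _ _ (by norm_num)
  omega
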